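/- Assume Σ = E[X Xᵀ] is positive definite with smallest eigenvalue λ_min > 0, and let A = X (X − γY)ᵀ. Then, in the Loewner order, E[Aᵀ Σ^{−1} A] ≼ λ_min^{−1} (1+γ)² Σ. -/

import Mathlib

open MeasureTheory ProbabilityTheory Matrix
noncomputable section

/-- Euclidean norm of a vector in `ℝ^d`. -/
def euclNorm {d : ℕ} (u : Fin d → ℝ) : ℝ := Real.sqrt (∑ i, u i ^ 2)

/-- Entrywise expectation of a random matrix. -/
def matExp {d : ℕ} {Ω : Type*} [MeasurableSpace Ω] (P : Measure Ω)
    (M : Ω → Matrix (Fin d) (Fin d) ℝ) : Matrix (Fin d) (Fin d) ℝ :=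
  Matrix.of fun i j => ∫ ω, M ω i j ∂P

/-- The `ℓ²`-operator norm of a real `d × d` matrix. -/
def opNorm {d : ℕ} (M : Matrix (Fin d) (Fin d) ℝ) : ℝ :=
  ‖Matrix.toEuclideanCLM (𝕜 := ℝ) M‖

lemma abs_le_euclNorm {d : ℕ} (u : Fin d → ℝ) (i : Fin d) : |u i| ≤ euclNorm u := by
  rw [euclNorm, ← Real.sqrt_sq_eq_abs]
  exact Real.sqrt_le_sqrt (Finset.single_le_sum (fun j _ => sq_nonneg (u j)) (Finset.mem_univ i))

lemma dot_self_eq {d : ℕ} (u : Fin d → ℝ) : u ⬝ᵥ u = euclNorm u ^ 2 := by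
  rw [euclNorm, Real.sq_sqrt (Finset.sum_nonneg fun j _ => sq_nonneg (u j))]
  simp [dotProduct, sq]

lemma vecMulVec_mulVec' {d : ℕ} (u w x : Fin d → ℝ) : vecMulVec u w *ᵥ x = (w ⬝ᵥ x) • u := by
  funext i
  simp only [mulVec, dotProduct, vecMulVec_apply, Pi.smul_apply, smul_eq_mul, Finset.sum_mul]
  exact Finset.sum_congr rfl fun j _ => by ring

lemma quad_vecMulVec {d : ℕ} (u w x : Fin d → ℝ) (S : Matrix (Fin d) (Fin d) ℝ) :
    x ⬝ᵥ ((vecMulVec u w)ᵀ * S * vecMulVec u w) *ᵥ x = (w ⬝ᵥ x) ^ 2 * (u ⬝ᵥ S *ᵥ u) := by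
  rw [← Matrix.mulVec_mulVec, ← Matrix.mulVec_mulVec, Matrix.dotProduct_mulVec,
    Matrix.vecMul_transpose, vecMulVec_mulVec', Matrix.mulVec_smul, smul_dotProduct,
    dotProduct_smul, smul_eq_mul, smul_eq_mul]
  ring

lemma quad_vecMulVec_self {d : ℕ} (u x : Fin d → ℝ) :
    x ⬝ᵥ (vecMulVec u u) *ᵥ x = (u ⬝ᵥ x) ^ 2 := by
  rw [vecMulVec_mulVec', dotProduct_smul, smul_eq_mul, dotProduct_comm x u]
  ring

lemma vecMulVec_entry {d : ℕ} (u w : Fin d → ℝ) (S : Matrix (Fin d) (Fin d) ℝ) (i j : Fin d) :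
    ((vecMulVec u w)ᵀ * S * vecMulVec u w) i j = w i * w j * (u ⬝ᵥ S *ᵥ u) := by
  simp only [Matrix.mul_apply, Matrix.transpose_apply, vecMulVec_apply, dotProduct, mulVec,
    Finset.sum_mul, Finset.mul_sum]
  rw [Finset.sum_comm]
  exact Finset.sum_congr rfl fun k _ => Finset.sum_congr rfl fun l _ => by ring

lemma loewner_inv {d : ℕ} (Sig : Matrix (Fin d) (Fin d) ℝ) (hpd : Sig.PosDef)
    (lam : ℝ) (hlampos : 0 < lam)
    (hlam : IsLeast {t : ℝ | ∃ v : Fin d → ℝ, v ≠ 0 ∧ Sig.mulVec v = t • v} lam) :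
    ∀ u : Fin d → ℝ, u ⬝ᵥ Sig⁻¹ *ᵥ u ≤ lam⁻¹ * (u ⬝ᵥ u) := by
  have hH := hpd.1
  set U : Matrix (Fin d) (Fin d) ℝ := (hH.eigenvectorUnitary : Matrix (Fin d) (Fin d) ℝ) with hU
  have hU2 : U * star U = 1 := mem_unitaryGroup_iff.mp (IsHermitian.eigenvectorUnitary hH).2
  have hU1 : star U * U = 1 := mem_unitaryGroup_iff'.mp (IsHermitian.eigenvectorUnitary hH).2
  have heig : ∀ i, lam ≤ hH.eigenvalues i := by
    intro i
    refine hlam.2 ⟨(hH.eigenvectorBasis i : EuclideanSpace ℝ (Fin d)), ?_, hH.mulVec_eigenvectorBasis i⟩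
    have hnorm := hH.eigenvectorBasis.orthonormal.1 i
    intro h0
    have : hH.eigenvectorBasis i = 0 := by
      ext j; exact congrFun h0 j
    rw [this, norm_zero] at hnorm
    norm_num at hnorm
  have hne : ∀ i, hH.eigenvalues i ≠ 0 := fun i => ne_of_gt (lt_of_lt_of_le hlampos (heig i))
  have hspec : Sig = U * diagonal hH.eigenvalues * star U := by
    have h := hH.spectral_theorem
    simpa using h
  have hinv : Sig⁻¹ = U * diagonal (fun i => (hH.eigenvalues i)⁻¹) * star U := by
    apply inv_eq_right_inv
    calc Sig * (U * diagonal (fun i => (hH.eigenvalues i)⁻¹) * star U)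
        = U * diagonal hH.eigenvalues * star U * (U * diagonal (fun i => (hH.eigenvalues i)⁻¹) * star U) := by
          rw [← hspec]
      _ = U * diagonal hH.eigenvalues * (star U * U) * (diagonal (fun i => (hH.eigenvalues i)⁻¹) * star U) := by
          simp only [Matrix.mul_assoc]
      _ = U * (diagonal hH.eigenvalues * diagonal (fun i => (hH.eigenvalues i)⁻¹)) * star U := by
          rw [hU1]; simp only [Matrix.mul_one, Matrix.mul_assoc]
      _ = 1 := by
          rw [diagonal_mul_diagonal]
          have : (fun i => hH.eigenvalues i * (hH.eigenvalues i)⁻¹) = fun _ : Fin d => (1:ℝ) := by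
            funext i; exact mul_inv_cancel₀ (hne i)
          rw [this, diagonal_one, Matrix.mul_one, hU2]
  have hps : (lam⁻¹ • (1 : Matrix (Fin d) (Fin d) ℝ) - Sig⁻¹).PosSemidef := by
    have hdiff : lam⁻¹ • (1 : Matrix (Fin d) (Fin d) ℝ) - Sig⁻¹
        = U * diagonal (fun i => lam⁻¹ - (hH.eigenvalues i)⁻¹) * Uᴴ := by
      have h1 : lam⁻¹ • (1 : Matrix (Fin d) (Fin d) ℝ) = U * diagonal (fun _ : Fin d => lam⁻¹) * star U := by
        rw [← smul_one_eq_diagonal, Matrix.mul_smul, Matrix.mul_one, Matrix.smul_mul, hU2]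
      rw [← Matrix.star_eq_conjTranspose, h1, hinv, ← Matrix.sub_mul, ← Matrix.mul_sub, diagonal_sub]
    rw [hdiff]
    exact (posSemidef_diagonal_iff.mpr fun i => by
      have := heig i
      have h2 : (hH.eigenvalues i)⁻¹ ≤ lam⁻¹ := inv_anti₀ hlampos this
      linarith).mul_mul_conjTranspose_same U
  intro u
  have h0 := hps.dotProduct_mulVec_nonneg u
  have hst : star u = u := by funext i; exact star_trivial _
  rw [hst, Matrix.sub_mulVec, dotProduct_sub, smul_mulVec, Matrix.one_mulVec,
    dotProduct_smul, smul_eq_mul] at h0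
  linarith

lemma integrable_of_bdd {Ω : Type*} [MeasurableSpace Ω] {P : Measure Ω} [IsFiniteMeasure P]
    {f : Ω → ℝ} {C : ℝ} (hm : Measurable f) (hb : ∀ᵐ ω ∂P, |f ω| ≤ C) : Integrable f P :=
  ⟨hm.aestronglyMeasurable, HasFiniteIntegral.of_bounded (C := C) (by simpa [Real.norm_eq_abs] using hb)⟩

lemma quad_matExp {d : ℕ} {Ω : Type*} [MeasurableSpace Ω] (P : Measure Ω)
    (f : Ω → Matrix (Fin d) (Fin d) ℝ) (hint : ∀ i j, Integrable (fun ω => f ω i j) P)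
    (x : Fin d → ℝ) :
    x ⬝ᵥ (matExp P f) *ᵥ x = ∫ ω, x ⬝ᵥ (f ω) *ᵥ x ∂P := by
  have hint2 : ∀ i : Fin d, Integrable (fun ω => x i * ∑ j, f ω i j * x j) P := by
    intro i
    exact (integrable_finset_sum _ (fun j _ => (hint i j).mul_const (x j))).const_mul (x i)
  calc x ⬝ᵥ (matExp P f) *ᵥ x
      = ∑ i, x i * ∑ j, (∫ ω, f ω i j ∂P) * x j := rfl
    _ = ∑ i, ∫ ω, x i * ∑ j, f ω i j * x j ∂P := by
        refine Finset.sum_congr rfl fun i _ => ?_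
        rw [integral_const_mul]
        congr 1
        rw [integral_finset_sum _ (fun j _ => (hint i j).mul_const (x j))]
        exact Finset.sum_congr rfl fun j _ => (integral_mul_const _ _).symm
    _ = ∫ ω, ∑ i, x i * ∑ j, f ω i j * x j ∂P := (integral_finset_sum _ (fun i _ => hint2 i)).symm
    _ = ∫ ω, x ⬝ᵥ (f ω) *ᵥ x ∂P := rfl

/-- If `Σ = E[X Xᵀ]` is positive definite with smallest eigenvalue
`λ_min > 0` and `A = X (X - γY)ᵀ`, then `E[Aᵀ Σ⁻¹ A] ≼ λ_min⁻¹ (1+γ)² Σ` in the Loewner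
order. -/
theorem stmt18 {d : ℕ} (hd : 1 ≤ d) (γ : ℝ) (hγ : γ ∈ Set.Ico (0 : ℝ) 1)
    {Ω : Type*} [MeasurableSpace Ω] (P : Measure Ω) [IsProbabilityMeasure P]
    (X Y : Ω → Fin d → ℝ) (hXm : Measurable X) (hYm : Measurable Y)
    (hX1 : ∀ᵐ ω ∂P, euclNorm (X ω) ≤ 1) (hY1 : ∀ᵐ ω ∂P, euclNorm (Y ω) ≤ 1)
    (hXY : IdentDistrib X Y P P)
    (Sig : Matrix (Fin d) (Fin d) ℝ)
    (hSig : Sig = matExp P (fun ω => vecMulVec (X ω) (X ω))) (hpd : Sig.PosDef)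
    (lam : ℝ) (hlampos : 0 < lam)
    (hlam : IsLeast {t : ℝ | ∃ v : Fin d → ℝ, v ≠ 0 ∧ Sig.mulVec v = t • v} lam) :
    ((lam⁻¹ * (1 + γ) ^ 2) • Sig
      - matExp P (fun ω =>
          (vecMulVec (X ω) (X ω - γ • Y ω))ᵀ * Sig⁻¹
            * vecMulVec (X ω) (X ω - γ • Y ω))).PosSemidef := by
  obtain ⟨hγ0, hγ1⟩ := hγ
  have hH := hpd.1
  have hloew := loewner_inv Sig hpd lam hlampos hlam
  have hlaminv : (0:ℝ) ≤ lam⁻¹ := inv_nonneg.mpr hlampos.le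
  have hXi : ∀ i, Measurable fun ω => X ω i := fun i => (measurable_pi_apply i).comp hXm
  have hYi : ∀ i, Measurable fun ω => Y ω i := fun i => (measurable_pi_apply i).comp hYm
  have hZi : ∀ i, Measurable fun ω => (X ω - γ • Y ω) i := by
    intro i
    have : (fun ω => (X ω - γ • Y ω) i) = fun ω => X ω i - γ * Y ω i := rfl
    rw [this]; exact (hXi i).sub ((hYi i).const_mul γ)
  have hqm : Measurable fun ω => X ω ⬝ᵥ Sig⁻¹ *ᵥ X ω := by
    have : (fun ω => X ω ⬝ᵥ Sig⁻¹ *ᵥ X ω) = fun ω => ∑ i, X ω i * ∑ j, Sig⁻¹ i j * X ω j := rfl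
    rw [this]
    exact Finset.measurable_sum _ fun i _ =>
      (hXi i).mul (Finset.measurable_sum _ fun j _ => (hXi j).const_mul _)
  have hbX : ∀ᵐ ω ∂P, ∀ i, |X ω i| ≤ 1 := hX1.mono fun ω h i => (abs_le_euclNorm _ i).trans h
  have hbY : ∀ᵐ ω ∂P, ∀ i, |Y ω i| ≤ 1 := hY1.mono fun ω h i => (abs_le_euclNorm _ i).trans h
  have hbZ : ∀ᵐ ω ∂P, ∀ i, |(X ω - γ • Y ω) i| ≤ 1 + γ := by
    filter_upwards [hbX, hbY] with ω h1 h2 i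
    have he : (X ω - γ • Y ω) i = X ω i - γ * Y ω i := rfl
    rw [he, sub_eq_add_neg]
    refine (abs_add_le _ _).trans ?_
    rw [abs_neg, abs_mul, abs_of_nonneg hγ0]
    have := h1 i; have := h2 i
    nlinarith
  have hbq : ∀ᵐ ω ∂P, 0 ≤ X ω ⬝ᵥ Sig⁻¹ *ᵥ X ω ∧ X ω ⬝ᵥ Sig⁻¹ *ᵥ X ω ≤ lam⁻¹ := by
    filter_upwards [hX1] with ω h
    have hXX : X ω ⬝ᵥ X ω ≤ 1 := by
      rw [dot_self_eq]
      exact pow_le_one₀ (Real.sqrt_nonneg _) h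
    constructor
    · have h0 := (hpd.posSemidef.inv).dotProduct_mulVec_nonneg (X ω)
      have hst : star (X ω) = X ω := by funext i; exact star_trivial _
      rwa [hst] at h0
    · calc X ω ⬝ᵥ Sig⁻¹ *ᵥ X ω ≤ lam⁻¹ * (X ω ⬝ᵥ X ω) := hloew (X ω)
        _ ≤ lam⁻¹ * 1 := by exact mul_le_mul_of_nonneg_left hXX hlaminv
        _ = lam⁻¹ := mul_one _
  have hfint : ∀ i j, Integrable (fun ω =>
      ((vecMulVec (X ω) (X ω - γ • Y ω))ᵀ * Sig⁻¹ * vecMulVec (X ω) (X ω - γ • Y ω)) i j) P := by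
    intro i j
    have he : (fun ω => ((vecMulVec (X ω) (X ω - γ • Y ω))ᵀ * Sig⁻¹ * vecMulVec (X ω) (X ω - γ • Y ω)) i j)
        = fun ω => (X ω - γ • Y ω) i * (X ω - γ • Y ω) j * (X ω ⬝ᵥ Sig⁻¹ *ᵥ X ω) := by
      funext ω; rw [vecMulVec_entry]
    rw [he]
    refine integrable_of_bdd (C := (1+γ) * (1+γ) * lam⁻¹) (((hZi i).mul (hZi j)).mul hqm) ?_
    filter_upwards [hbZ, hbq] with ω h1 h2
    rw [abs_mul, abs_mul]
    have hi := h1 i; have hj := h1 j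
    have hq1 : |X ω ⬝ᵥ Sig⁻¹ *ᵥ X ω| ≤ lam⁻¹ := by
      rw [abs_of_nonneg h2.1]; exact h2.2
    exact mul_le_mul (mul_le_mul hi hj (abs_nonneg _) (by linarith)) hq1 (abs_nonneg _)
      (by nlinarith)
  have hvint : ∀ i j, Integrable (fun ω => vecMulVec (X ω) (X ω) i j) P := by
    intro i j
    have he : (fun ω => vecMulVec (X ω) (X ω) i j) = fun ω => X ω i * X ω j := rfl
    rw [he]
    refine integrable_of_bdd (C := 1) ((hXi i).mul (hXi j)) ?_
    filter_upwards [hbX] with ω h1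
    rw [abs_mul]
    have := h1 i; have := h1 j
    have := abs_nonneg (X ω i); have := abs_nonneg (X ω j)
    nlinarith
  refine posSemidef_iff_dotProduct_mulVec.mpr ⟨?_, ?_⟩
  · -- Hermitian
    have h1 : ((lam⁻¹ * (1 + γ) ^ 2) • Sig).IsHermitian := by
      show _ᴴ = _
      rw [conjTranspose_smul, hH]
      congr 1
    have h2 : (matExp P (fun ω =>
        (vecMulVec (X ω) (X ω - γ • Y ω))ᵀ * Sig⁻¹ * vecMulVec (X ω) (X ω - γ • Y ω))).IsHermitian := by
      show _ᴴ = _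
      ext i j
      simp only [conjTranspose_apply, matExp, Matrix.of_apply, star_trivial]
      congr 1
      funext ω
      rw [vecMulVec_entry, vecMulVec_entry]
      ring
    exact h1.sub h2
  · intro x
    have hst : star x = x := by funext i; exact star_trivial _
    rw [hst, Matrix.sub_mulVec, dotProduct_sub, smul_mulVec, dotProduct_smul, smul_eq_mul]
    -- scalar functions
    have ham : Measurable fun ω => X ω ⬝ᵥ x := Finset.measurable_sum _ fun i _ => (hXi i).mul_const _
    have hbm : Measurable fun ω => Y ω ⬝ᵥ x := Finset.measurable_sum _ fun i _ => (hYi i).mul_const _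
    have hzm : Measurable fun ω => (X ω - γ • Y ω) ⬝ᵥ x :=
      Finset.measurable_sum _ fun i _ => (hZi i).mul_const _
    set Cx : ℝ := ∑ i, |x i| with hCx
    have hCx0 : 0 ≤ Cx := Finset.sum_nonneg fun i _ => abs_nonneg _
    have hdotbd : ∀ (v : Fin d → ℝ), (∀ i, |v i| ≤ 1) → |v ⬝ᵥ x| ≤ Cx := by
      intro v hv
      refine (Finset.abs_sum_le_sum_abs _ _).trans ?_
      refine Finset.sum_le_sum fun i _ => ?_
      rw [abs_mul]
      have := abs_nonneg (x i)
      nlinarith [hv i, abs_nonneg (v i)]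
    have hba : ∀ᵐ ω ∂P, |X ω ⬝ᵥ x| ≤ Cx := hbX.mono fun ω h => hdotbd _ h
    have hbb : ∀ᵐ ω ∂P, |Y ω ⬝ᵥ x| ≤ Cx := hbY.mono fun ω h => hdotbd _ h
    have hz : ∀ ω, (X ω - γ • Y ω) ⬝ᵥ x = X ω ⬝ᵥ x - γ * (Y ω ⬝ᵥ x) := by
      intro ω
      rw [sub_dotProduct, smul_dotProduct, smul_eq_mul]
    have hbz : ∀ᵐ ω ∂P, |(X ω - γ • Y ω) ⬝ᵥ x| ≤ (1 + γ) * Cx := by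
      filter_upwards [hba, hbb] with ω h1 h2
      rw [hz, sub_eq_add_neg]
      refine (abs_add_le _ _).trans ?_
      rw [abs_neg, abs_mul, abs_of_nonneg hγ0]
      nlinarith [abs_nonneg (Y ω ⬝ᵥ x)]
    have sqbd : ∀ {u C : ℝ}, |u| ≤ C → |u ^ 2| ≤ C ^ 2 := by
      intro u C h
      rw [abs_pow]
      exact pow_le_pow_left₀ (abs_nonneg u) h 2
    have ia2 : Integrable (fun ω => (X ω ⬝ᵥ x) ^ 2) P :=
      integrable_of_bdd (ham.pow_const 2) (hba.mono fun ω h => sqbd h)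
    have ib2 : Integrable (fun ω => (Y ω ⬝ᵥ x) ^ 2) P :=
      integrable_of_bdd (hbm.pow_const 2) (hbb.mono fun ω h => sqbd h)
    have iz2 : Integrable (fun ω => ((X ω - γ • Y ω) ⬝ᵥ x) ^ 2) P :=
      integrable_of_bdd (hzm.pow_const 2) (hbz.mono fun ω h => sqbd h)
    have ig : Integrable (fun ω => ((X ω - γ • Y ω) ⬝ᵥ x) ^ 2 * (X ω ⬝ᵥ Sig⁻¹ *ᵥ X ω)) P := by
      refine integrable_of_bdd (C := ((1+γ)*Cx)^2 * lam⁻¹) ((hzm.pow_const 2).mul hqm) ?_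
      filter_upwards [hbz, hbq] with ω h1 h2
      rw [abs_mul]
      have h3 := sqbd h1
      have h4 : |X ω ⬝ᵥ Sig⁻¹ *ᵥ X ω| ≤ lam⁻¹ := by rw [abs_of_nonneg h2.1]; exact h2.2
      exact mul_le_mul h3 h4 (abs_nonneg _) (by positivity)
    have hSigQ : x ⬝ᵥ Sig *ᵥ x = ∫ ω, (X ω ⬝ᵥ x) ^ 2 ∂P := by
      rw [hSig, quad_matExp P _ hvint x]
      exact integral_congr_ae (ae_of_all _ fun ω => quad_vecMulVec_self (X ω) x)
    have hMQ : x ⬝ᵥ (matExp P (fun ω => (vecMulVec (X ω) (X ω - γ • Y ω))ᵀ * Sig⁻¹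
          * vecMulVec (X ω) (X ω - γ • Y ω))) *ᵥ x
        = ∫ ω, ((X ω - γ • Y ω) ⬝ᵥ x) ^ 2 * (X ω ⬝ᵥ Sig⁻¹ *ᵥ X ω) ∂P := by
      rw [quad_matExp P _ hfint x]
      exact integral_congr_ae (ae_of_all _ fun ω => quad_vecMulVec (X ω) (X ω - γ • Y ω) x Sig⁻¹)
    have key3 : ∫ ω, (X ω ⬝ᵥ x) ^ 2 ∂P = ∫ ω, (Y ω ⬝ᵥ x) ^ 2 ∂P := by
      have hg : Measurable fun v : Fin d → ℝ => (v ⬝ᵥ x) ^ 2 :=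
        (Finset.measurable_sum _ fun i _ => (measurable_pi_apply i).mul_const _).pow_const 2
      exact (hXY.comp hg).integral_eq
    have key1 : ∫ ω, ((X ω - γ • Y ω) ⬝ᵥ x) ^ 2 * (X ω ⬝ᵥ Sig⁻¹ *ᵥ X ω) ∂P
        ≤ lam⁻¹ * ∫ ω, ((X ω - γ • Y ω) ⬝ᵥ x) ^ 2 ∂P := by
      rw [← integral_const_mul]
      refine integral_mono_ae ig (iz2.const_mul _) ?_
      filter_upwards [hbq] with ω h2
      calc ((X ω - γ • Y ω) ⬝ᵥ x) ^ 2 * (X ω ⬝ᵥ Sig⁻¹ *ᵥ X ω)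
          ≤ ((X ω - γ • Y ω) ⬝ᵥ x) ^ 2 * lam⁻¹ := mul_le_mul_of_nonneg_left h2.2 (sq_nonneg _)
        _ = lam⁻¹ * ((X ω - γ • Y ω) ⬝ᵥ x) ^ 2 := mul_comm _ _
    have key2 : ∫ ω, ((X ω - γ • Y ω) ⬝ᵥ x) ^ 2 ∂P
        ≤ (1+γ) * (∫ ω, (X ω ⬝ᵥ x) ^ 2 ∂P) + (γ + γ^2) * (∫ ω, (Y ω ⬝ᵥ x) ^ 2 ∂P) := by
      have h5 : ∫ ω, ((X ω - γ • Y ω) ⬝ᵥ x) ^ 2 ∂P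
          ≤ ∫ ω, ((1+γ) * (X ω ⬝ᵥ x) ^ 2 + (γ + γ^2) * (Y ω ⬝ᵥ x) ^ 2) ∂P := by
        refine integral_mono_ae iz2 ((ia2.const_mul _).add (ib2.const_mul _)) (ae_of_all _ fun ω => ?_)
        show ((X ω - γ • Y ω) ⬝ᵥ x) ^ 2 ≤ (1 + γ) * (X ω ⬝ᵥ x) ^ 2 + (γ + γ ^ 2) * (Y ω ⬝ᵥ x) ^ 2
        rw [hz]
        nlinarith [sq_nonneg (X ω ⬝ᵥ x + Y ω ⬝ᵥ x), hγ0]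
      rwa [integral_add (ia2.const_mul _) (ib2.const_mul _), integral_const_mul, integral_const_mul] at h5
    have hQ0 : 0 ≤ ∫ ω, (X ω ⬝ᵥ x) ^ 2 ∂P := integral_nonneg fun ω => sq_nonneg _
    rw [hSigQ, hMQ]
    have h6 : lam⁻¹ * (∫ ω, ((X ω - γ • Y ω) ⬝ᵥ x) ^ 2 ∂P)
        ≤ lam⁻¹ * ((1 + 2*γ + γ^2) * ∫ ω, (X ω ⬝ᵥ x) ^ 2 ∂P) := by
      refine mul_le_mul_of_nonneg_left ?_ hlaminv
      rw [← key3] at key2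
      linarith [key2]
    nlinarith [key1, h6, hQ0]
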